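/- Let (G, τ) be an s-group such that τ = τ_S for a finite T_s-set S of sequences. Then there exists a single T-sequence d in G with τ = τ_d. (Interleaving the finitely many sequences of S into one sequence d yields τ_d = τ_S.) -/

import Mathlib

open Filter Topology Pointwise

/-- `u` converges to the identity in the group topology `t`. -/
def TendstoOne {G : Type*} [Group G] (t : GroupTopology G) (u : ℕ → G) : Prop :=
  Filter.Tendsto u Filter.atTop (@nhds G t.toTopologicalSpace 1)

/-- The group topology `t` is Hausdorff. -/
def IsHausdorffGT {G : Type*} [Group G] (t : GroupTopology G) : Prop :=
  @T2Space G t.toTopologicalSpace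

/-- `S` is a `T_s`-set of sequences: some Hausdorff group topology makes every
sequence of `S` converge to the identity. -/
def IsTsSet {G : Type*} [Group G] (S : Set (ℕ → G)) : Prop :=
  ∃ t : GroupTopology G, IsHausdorffGT t ∧ ∀ u ∈ S, TendstoOne t u

/-- `τ` is the finest Hausdorff group topology on `G` in which every sequence of `S`
converges to the identity (recall that in Mathlib's order on topologies, finer = smaller). -/
def IsTauS {G : Type*} [Group G] (S : Set (ℕ → G)) (τ : GroupTopology G) : Prop :=
  IsHausdorffGT τ ∧ (∀ u ∈ S, TendstoOne τ u) ∧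
    ∀ t : GroupTopology G, IsHausdorffGT t → (∀ u ∈ S, TendstoOne t u) → τ ≤ t

/-- The given topological-group structure on `G`, as a term of `GroupTopology G`. -/
def ambientGT (G : Type*) [Group G] [τ : TopologicalSpace G] [h : IsTopologicalGroup G] :
    GroupTopology G := ⟨τ, h⟩

/-- The set of all sequences converging to the identity in a group topology. -/
def SeqConvOne {G : Type*} [Group G] (t : GroupTopology G) : Set (ℕ → G) :=
  {u | TendstoOne t u}

/-- `(G, τ)` is an `s`-group: its topology is the finest Hausdorff group topology in which
every member of some `T_s`-set of sequences converges to the identity. -/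
def IsSGroup (G : Type*) [Group G] [TopologicalSpace G] [IsTopologicalGroup G] [T2Space G] :
    Prop :=
  ∃ S : Set (ℕ → G), IsTauS S (ambientGT G)


lemma interleave_tendsto_iff {X : Type*} [TopologicalSpace X] {q : ℕ} (hq : 0 < q)
    (u : Fin q → ℕ → X) (x : X) :
    Filter.Tendsto (fun n => u ⟨n % q, Nat.mod_lt n hq⟩ (n / q)) Filter.atTop (nhds x) ↔
      ∀ i, Filter.Tendsto (u i) Filter.atTop (nhds x) := by
  constructor
  · intro h i
    have hcomp : Filter.Tendsto (fun k => q * k + (i : ℕ)) Filter.atTop Filter.atTop := by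
      apply Filter.tendsto_atTop_mono (f := id)
      · intro k
        exact (Nat.le_mul_of_pos_left k hq).trans (Nat.le_add_right _ _)
      · exact tendsto_id
    have h2 := h.comp hcomp
    have heq : ((fun n => u ⟨n % q, Nat.mod_lt n hq⟩ (n / q)) ∘ fun k => q * k + (i : ℕ))
        = u i := by
      funext k
      simp only [Function.comp_apply]
      have hm : (q * k + (i : ℕ)) % q = (i : ℕ) := by
        rw [Nat.mul_add_mod, Nat.mod_eq_of_lt i.isLt]
      have hd : (q * k + (i : ℕ)) / q = k := by
        rw [Nat.mul_add_div hq, Nat.div_eq_of_lt i.isLt, Nat.add_zero]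
      have : (⟨(q * k + (i : ℕ)) % q, Nat.mod_lt _ hq⟩ : Fin q) = i := by
        apply Fin.ext; simpa using hm
      rw [this, hd]
    exact heq ▸ h2
  · intro h
    rw [Filter.tendsto_atTop']
    intro U hU
    have hev : ∀ᶠ k in Filter.atTop, ∀ i, u i k ∈ U := by
      rw [Filter.eventually_all]
      intro i
      exact h i hU
    obtain ⟨N, hN⟩ := Filter.eventually_atTop.1 hev
    refine ⟨q * N, fun n hn => ?_⟩
    have : N ≤ n / q := (Nat.le_div_iff_mul_le hq).2 (by rw [Nat.mul_comm] at hn; omega)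
    exact hN _ this _

/-- if `τ = τ_S` for a finite `T_s`-set `S` of sequences in `G`, then there is a
single `T`-sequence `d` in `G` with `τ = τ_d` (interleaving the finitely many sequences). -/
theorem stmt15 {G : Type*} [Group G] (S : Set (ℕ → G)) (hS : S.Finite)
    (τ : GroupTopology G) (hτ : IsTauS S τ) :
    ∃ d : ℕ → G, IsTauS {d} τ := by
  obtain ⟨q, f, hf⟩ := hS.fin_embedding
  rcases Nat.eq_zero_or_pos q with hq | hq
  · refine ⟨fun _ => 1, hτ.1, ?_, ?_⟩
    · intro u hu
      rw [Set.mem_singleton_iff] at hu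
      subst hu
      letI := τ.toTopologicalSpace; exact tendsto_const_nhds
    · intro t ht _
      refine hτ.2.2 t ht ?_
      intro v hv
      rw [← hf] at hv
      obtain ⟨i, rfl⟩ := hv
      exact absurd i.isLt (by omega)
  · set d : ℕ → G := fun n => f ⟨n % q, Nat.mod_lt n hq⟩ (n / q) with hd
    have key : ∀ t : GroupTopology G, TendstoOne t d ↔ ∀ u ∈ S, TendstoOne t u := by
      intro t
      rw [show TendstoOne t d ↔
        Filter.Tendsto d Filter.atTop (@nhds G t.toTopologicalSpace 1) from Iff.rfl]
      rw [@interleave_tendsto_iff G t.toTopologicalSpace q hq (fun i => f i) 1]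
      constructor
      · intro h u hu
        rw [← hf] at hu
        obtain ⟨i, rfl⟩ := hu
        exact h i
      · intro h i
        exact h (f i) (hf ▸ Set.mem_range_self i)
    refine ⟨d, hτ.1, ?_, ?_⟩
    · intro u hu
      rw [Set.mem_singleton_iff] at hu
      subst hu
      exact (key τ).2 hτ.2.1
    · intro t ht hconv
      exact hτ.2.2 t ht ((key t).1 (hconv d rfl))
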